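/- Let Z : Fin N → ℝ^k, Π a partition of Fin N into nonempty classes, μ_π the mean of Z over class π, and M_intra = ∑_{π∈Π} ∑_{i∈π} ‖z_i − μ_π‖². Then for any two distinct classes π, π' ∈ Π, M_intra ≥ (1/4) |ξ_{π→π'}| ‖μ_π − μ_{π'}‖², where ξ_{π→π'} = { i ∈ π : ‖z_i − μ_π‖ ≥ ‖z_i − μ_{π'}‖ }. -/

import Mathlib

open Finset

/-- the intra-class K-means distortion dominates
`(1/4) |ξ_{π→π'}| ‖μ_π − μ_{π'}‖²` for any two distinct classes. -/
theorem kmeans_intra_lower_bound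
    (N k C : ℕ) (Z : Fin N → EuclideanSpace ℝ (Fin k))
    (c : Fin N → Fin C)
    (hne : ∀ a : Fin C, (Finset.univ.filter (fun i => c i = a)).Nonempty)
    (μ : Fin C → EuclideanSpace ℝ (Fin k))
    (hμ : ∀ a, μ a = ((Finset.univ.filter (fun i => c i = a)).card : ℝ)⁻¹ •
        ∑ i ∈ Finset.univ.filter (fun i => c i = a), Z i)
    (Mintra : ℝ)
    (hM : Mintra = ∑ a : Fin C, ∑ i ∈ Finset.univ.filter (fun i => c i = a),
        ‖Z i - μ a‖ ^ 2)
    (a b : Fin C) (hab : a ≠ b) :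
    (1 / 4 : ℝ) *
        (((Finset.univ.filter (fun i => c i = a)).filter
            (fun i => ‖Z i - μ b‖ ≤ ‖Z i - μ a‖)).card : ℝ) *
        ‖μ a - μ b‖ ^ 2 ≤ Mintra := by
  subst hM
  set S := Finset.univ.filter (fun i => c i = a) with hS
  set ξ := S.filter (fun i => ‖Z i - μ b‖ ≤ ‖Z i - μ a‖) with hξ
  have key : ∀ i ∈ ξ, (1 / 4 : ℝ) * ‖μ a - μ b‖ ^ 2 ≤ ‖Z i - μ a‖ ^ 2 := by
    intro i hi
    have h := (Finset.mem_filter.mp hi).2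
    have htri : ‖μ a - μ b‖ ≤ ‖Z i - μ a‖ + ‖Z i - μ b‖ := by
      calc ‖μ a - μ b‖ = ‖(μ a - Z i) + (Z i - μ b)‖ := by rw [sub_add_sub_cancel]
        _ ≤ ‖μ a - Z i‖ + ‖Z i - μ b‖ := norm_add_le _ _
        _ = ‖Z i - μ a‖ + ‖Z i - μ b‖ := by rw [norm_sub_rev]
    nlinarith [norm_nonneg (Z i - μ a), norm_nonneg (μ a - μ b)]
  have h1 : (1 / 4 : ℝ) * (ξ.card : ℝ) * ‖μ a - μ b‖ ^ 2
      ≤ ∑ i ∈ ξ, ‖Z i - μ a‖ ^ 2 := by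
    calc (1 / 4 : ℝ) * (ξ.card : ℝ) * ‖μ a - μ b‖ ^ 2
        = ∑ _i ∈ ξ, (1 / 4 : ℝ) * ‖μ a - μ b‖ ^ 2 := by
          rw [Finset.sum_const, nsmul_eq_mul]; ring
      _ ≤ ∑ i ∈ ξ, ‖Z i - μ a‖ ^ 2 := Finset.sum_le_sum key
  have h2 : ∑ i ∈ ξ, ‖Z i - μ a‖ ^ 2 ≤ ∑ i ∈ S, ‖Z i - μ a‖ ^ 2 :=
    Finset.sum_le_sum_of_subset_of_nonneg (Finset.filter_subset _ _)
      (fun i _ _ => by positivity)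
  have h3 : ∑ i ∈ S, ‖Z i - μ a‖ ^ 2
      ≤ ∑ a' : Fin C, ∑ i ∈ Finset.univ.filter (fun i => c i = a'), ‖Z i - μ a'‖ ^ 2 :=
    Finset.single_le_sum (f := fun a' => ∑ i ∈ Finset.univ.filter (fun i => c i = a'),
      ‖Z i - μ a'‖ ^ 2) (fun a' _ => Finset.sum_nonneg (fun i _ => by positivity))
      (Finset.mem_univ a)
  linarith
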